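/- arXiv:2207.05985 — 3 statements merged into one kernel-verified Lean document; each statement's English description precedes it below -/
import Mathlib

section
/- Let o : {0,1}^n → {0,1}^n be defined by o(v) = M(v ⊕ s) over GF(2), where M = P A Pᵀ for a permutation matrix P, an invertible upper-triangular matrix A over GF(2), and a fixed vector s. Then o is a valid hypercube orientation, i.e., for all v and all i, o(v)_i ≠ o(v ⊕ e_i)_i. -/
open Matrix

/-- If `o v = M (v ⊕ s)` over GF(2) with `M = P A Pᵀ` for a permutation
matrix `P` and an invertible upper-triangular matrix `A`, then `o` is a valid
hypercube orientation: `o(v)_i ≠ o(v ⊕ e_i)_i` for all `v, i`. -/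
theorem matousek_type_is_orientation (n : ℕ) (σ : Equiv.Perm (Fin n))
    (A : Matrix (Fin n) (Fin n) (ZMod 2))
    (hupper : ∀ i j : Fin n, j < i → A i j = 0)
    (hinv : IsUnit A)
    (s : Fin n → ZMod 2)
    (P : Matrix (Fin n) (Fin n) (ZMod 2)) (hP : P = σ.permMatrix (ZMod 2))
    (M : Matrix (Fin n) (Fin n) (ZMod 2)) (hM : M = P * A * Pᵀ)
    (o : (Fin n → ZMod 2) → (Fin n → ZMod 2))
    (ho : ∀ v, o v = M.mulVec (v + s)) :
    ∀ (v : Fin n → ZMod 2) (i : Fin n),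
      o v i ≠ o (v + Pi.single i 1) i := by
  -- diagonal entries of A are nonzero
  have hdet : A.det = ∏ j, A j j := Matrix.det_of_upperTriangular hupper
  have hdiag : ∀ j, A j j ≠ 0 := by
    have := (Matrix.isUnit_iff_isUnit_det A).mp hinv
    rw [hdet] at this
    intro j hj
    apply this.ne_zero
    exact Finset.prod_eq_zero (Finset.mem_univ j) hj
  have hMii : ∀ i, M i i = A (σ i) (σ i) := by
    intro i
    rw [hM, hP, Equiv.Perm.permMatrix, Matrix.mul_apply]
    rw [PEquiv.toMatrix_toPEquiv_mul]
    simp [Matrix.transpose_apply, PEquiv.toMatrix_apply, Equiv.toPEquiv_apply,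
      Matrix.submatrix_apply, Finset.sum_ite_eq, eq_comm]
  intro v i h
  rw [ho, ho] at h
  have : M.mulVec (v + Pi.single i 1 + s) = M.mulVec (v + s) + M.mulVec (Pi.single i 1) := by
    rw [← Matrix.mulVec_add]; ring_nf
  rw [this] at h
  simp only [Pi.add_apply, Matrix.mulVec_single, mul_one, MulOpposite.op_one, one_smul, Matrix.col_apply] at h
  have h0 : M i i = 0 := (left_eq_add.mp h)
  rw [hMii] at h0
  exact hdiag _ h0
end

section
/- Let A be an invertible upper-triangular n × n matrix over GF(2) and define the orientation o(v) = Av on the n-dimensional hypercube. Then o is a unique sink orientation: for every face of the hypercube (determined by fixing some coordinates and letting the rest vary), there is exactly one vertex v in the face with o(v)_i = 0 for all free coordinates i of the face. -/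
open Matrix

open Classical in
/-- For an invertible upper-triangular matrix `A` over GF(2), the
orientation `o v = A v` is a unique sink orientation: every face of the hypercube
(given by a set `F` of free coordinates and a base vertex `b`) contains exactly
one vertex `v` with `(A v)_i = 0` for all `i ∈ F`. -/
theorem matousek_uso_unique_sink (n : ℕ)
    (A : Matrix (Fin n) (Fin n) (ZMod 2))
    (hupper : ∀ i j : Fin n, j < i → A i j = 0)
    (hinv : IsUnit A)
    (F : Set (Fin n)) (b : Fin n → ZMod 2) :
    ∃! v : Fin n → ZMod 2,
      (∀ i : Fin n, i ∉ F → v i = b i) ∧ (∀ i ∈ F, A.mulVec v i = 0) := by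
  classical
  -- diagonal entries are 1
  have hdet : A.det = ∏ i, A i i := Matrix.det_of_upperTriangular hupper
  have hdiag : ∀ i, A i i = 1 := by
    intro i
    have hu : IsUnit A.det := (Matrix.isUnit_iff_isUnit_det A).mp hinv
    rw [hdet] at hu
    have hne : A i i ≠ 0 := by
      intro h0
      have : (∏ j, A j j) = 0 := Finset.prod_eq_zero (Finset.mem_univ i) h0
      rw [this] at hu
      exact hu.ne_zero rfl
    revert hne
    have : ∀ x : ZMod 2, x ≠ 0 → x = 1 := by decide
    exact this _
  -- the map L
  set L : (Fin n → ZMod 2) → (Fin n → ZMod 2) :=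
    fun u i => if i ∈ F then A.mulVec u i else u i with hL
  -- kernel of L is trivial
  have hker : ∀ u : Fin n → ZMod 2, L u = 0 → u = 0 := by
    intro u hu
    by_contra hne
    have hsne : (Finset.univ.filter fun i => u i ≠ 0).Nonempty := by
      rcases Function.ne_iff.mp hne with ⟨i, hi⟩
      exact ⟨i, by simpa using hi⟩
    set m := (Finset.univ.filter fun i => u i ≠ 0).max' hsne with hm
    have hmmem : u m ≠ 0 := by
      have := (Finset.univ.filter fun i => u i ≠ 0).max'_mem hsne
      simpa using this
    have hmax : ∀ j, m < j → u j = 0 := by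
      intro j hj
      by_contra hj0
      have : j ≤ m := Finset.le_max' _ j (by simp [hj0])
      exact absurd hj (not_lt.mpr this)
    have hLm := congrFun hu m
    by_cases hmF : m ∈ F
    · simp only [hL, hmF, if_pos] at hLm
      have : A.mulVec u m = u m := by
        rw [Matrix.mulVec, dotProduct]
        rw [Finset.sum_eq_single m]
        · rw [hdiag m, one_mul]
        · intro j _ hj
          rcases lt_or_gt_of_ne hj with h | h
          · rw [hupper m j h, zero_mul]
          · rw [hmax j h, mul_zero]
        · intro h; exact absurd (Finset.mem_univ m) h
      rw [this] at hLm
      exact hmmem hLm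
    · simp only [hL, hmF, if_neg, not_false_iff] at hLm
      exact hmmem hLm
  -- L is additive-ish: L injective
  have hinj : Function.Injective L := by
    intro u w huw
    have : L (u - w) = 0 := by
      funext i
      have h := congrFun huw i
      by_cases hiF : i ∈ F
      · simp only [hL, hiF, if_pos] at h ⊢
        rw [Matrix.mulVec_sub]
        simpa [sub_eq_zero] using h
      · simp only [hL, hiF, if_neg, not_false_iff, Pi.zero_apply] at h ⊢
        simp [sub_eq_zero, h]
    have := hker _ this
    exact sub_eq_zero.mp this
  have hsurj : Function.Surjective L := Finite.injective_iff_surjective.mp hinj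
  -- target vector
  set t : Fin n → ZMod 2 := fun i => if i ∈ F then 0 else b i with ht
  obtain ⟨v, hv⟩ := hsurj t
  refine ⟨v, ⟨?_, ?_⟩, ?_⟩
  · intro i hiF
    have := congrFun hv i
    simpa [hL, ht, hiF] using this
  · intro i hiF
    have := congrFun hv i
    simpa [hL, ht, hiF] using this
  · intro w ⟨hw1, hw2⟩
    apply hinj
    rw [hv]
    funext i
    by_cases hiF : i ∈ F
    · simp [hL, ht, hiF, hw2 i hiF]
    · simp [hL, ht, hiF, hw1 i hiF]
end

section
/- Iterating the levelling step: define q⁰ = 1⃗ and q^{i+1} = q^i ⊙ ((M q^i) ⊕ q^i) (coordinatewise product over GF(2)). Then for every i ≥ 0 and every vertex v, q^i_v = 1 if and only if the binary representation of the level ℓ(v) of v has its bits 0 through i−1 all equal to 1, and ((M q^i) ⊕ q^i)_v = 1 if and only if the i-th bit of ℓ(v) equals 1. -/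
open Matrix

/-- `u` is a strict ancestor of `v` in the branching given by `parent`. -/
def IsAncestor {n : ℕ} (parent : Fin n → Option (Fin n)) (u v : Fin n) : Prop :=
  Relation.TransGen (fun a b => parent b = some a) u v

lemma ancestor_lvl_lt {n : ℕ} (parent : Fin n → Option (Fin n)) (lvl : Fin n → ℕ)
    (hchild : ∀ v u : Fin n, parent v = some u → lvl v = lvl u + 1)
    {u v : Fin n} (h : IsAncestor parent u v) : lvl u < lvl v := by
  induction h with
  | single h => have := hchild _ _ h; omega
  | tail _ h ih => have := hchild _ _ h; omega

lemma ancestor_iff {n : ℕ} (parent : Fin n → Option (Fin n)) {u v w : Fin n}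
    (h : parent v = some u) : IsAncestor parent w v ↔ w = u ∨ IsAncestor parent w u := by
  constructor
  · intro hw
    cases hw with
    | single h' => rw [h] at h'; exact Or.inl (Option.some.inj h').symm
    | tail hwb h' =>
      rw [h] at h'
      exact Or.inr ((Option.some.inj h') ▸ hwb)
  · rintro (rfl | hw)
    · exact Relation.TransGen.single h
    · exact hw.tail h

lemma zmod2_cases (x : ZMod 2) : x = 0 ∨ x = 1 := by revert x; decide

lemma cast_zmod2_eq_one (a : ℕ) : (a : ZMod 2) = 1 ↔ a % 2 = 1 := by
  have h := Nat.mod_two_eq_zero_or_one a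
  rw [← ZMod.natCast_mod a 2]
  rcases h with h | h <;> rw [h] <;> simp

lemma dvd_iff_mod (i L : ℕ) : 2 ^ i ∣ L + 1 ↔ L % 2 ^ i = 2 ^ i - 1 := by
  have hp : 0 < 2 ^ i := Nat.two_pow_pos i
  constructor
  · rintro ⟨m, hm⟩
    have hm1 : 1 ≤ m := by nlinarith
    have hL : L = 2 ^ i * (m - 1) + (2 ^ i - 1) := by
      have : 2 ^ i * m = 2 ^ i * (m - 1) + 2 ^ i := by
        rw [← Nat.mul_succ]; congr 1; omega
      omega
    rw [hL, Nat.mul_add_mod, Nat.mod_eq_of_lt (by omega)]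
  · intro h
    refine ⟨L / 2 ^ i + 1, ?_⟩
    have := Nat.div_add_mod L (2 ^ i)
    rw [Nat.mul_add, Nat.mul_one]
    omega

lemma bits_iff (i L : ℕ) : 2 ^ i ∣ L + 1 ↔ ∀ j < i, L.testBit j = true := by
  have hp : 0 < 2 ^ i := Nat.two_pow_pos i
  rw [dvd_iff_mod]
  constructor
  · intro h j hj
    have h1 := Nat.testBit_mod_two_pow L i j
    rw [h, Nat.testBit_two_pow_sub_one] at h1
    simpa [hj] using h1.symm
  · intro h
    apply Nat.eq_of_testBit_eq
    intro j
    rw [Nat.testBit_mod_two_pow, Nat.testBit_two_pow_sub_one]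
    by_cases hj : j < i
    · simp [hj, h j hj]
    · simp [hj]

open Classical in
lemma anc_sum {n : ℕ} (parent : Fin n → Option (Fin n)) (lvl : Fin n → ℕ)
    (hroot : ∀ v, parent v = none → lvl v = 0)
    (hchild : ∀ v u, parent v = some u → lvl v = lvl u + 1)
    (p : ℕ) (hp : 0 < p) :
    ∀ v : Fin n,
      (∑ w, if IsAncestor parent w v then (if p ∣ lvl w + 1 then (1 : ZMod 2) else 0) else 0)
        = ((lvl v / p : ℕ) : ZMod 2) := by
  suffices H : ∀ N (v : Fin n), lvl v = N →
      (∑ w, if IsAncestor parent w v then (if p ∣ lvl w + 1 then (1 : ZMod 2) else 0) else 0)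
        = ((lvl v / p : ℕ) : ZMod 2) by
    exact fun v => H (lvl v) v rfl
  intro N
  induction N using Nat.strong_induction_on with
  | _ N ih =>
    intro v hv
    cases hpar : parent v with
    | none =>
      have h0 : lvl v = 0 := hroot v hpar
      have hempty : ∀ w, ¬ IsAncestor parent w v := by
        intro w hw
        cases hw with
        | single h' => rw [hpar] at h'; exact Option.some_ne_none _ h'.symm
        | tail _ h' => rw [hpar] at h'; exact Option.some_ne_none _ h'.symm
      simp [hempty, h0]
    | some u =>
      have hlv : lvl v = lvl u + 1 := hchild v u hpar
      have hlt : lvl u < N := by omega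
      have hu := ih (lvl u) hlt u rfl
      have hnotanc : ¬ IsAncestor parent u u := fun h =>
        absurd (ancestor_lvl_lt parent lvl hchild h) (lt_irrefl _)
      have hsplit : ∀ w : Fin n,
          (if IsAncestor parent w v then (if p ∣ lvl w + 1 then (1 : ZMod 2) else 0) else 0)
            = (if w = u then (if p ∣ lvl w + 1 then (1 : ZMod 2) else 0) else 0)
              + (if IsAncestor parent w u then (if p ∣ lvl w + 1 then (1 : ZMod 2) else 0) else 0) := by
        intro w
        by_cases hw : w = u
        · subst hw; simp [ancestor_iff parent hpar, hnotanc]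
        · by_cases hw2 : IsAncestor parent w u <;>
            simp [ancestor_iff parent hpar, hw, hw2]
      rw [Finset.sum_congr rfl (fun w _ => hsplit w), Finset.sum_add_distrib,
        Finset.sum_ite_eq', hu]
      simp only [Finset.mem_univ, if_true]
      rw [hlv, Nat.succ_div, Nat.cast_add]
      split_ifs <;> simp <;> ring

/-- Iterating the levelling step `q⁰ = 1⃗`,
`q^{i+1} = q^i ⊙ ((M q^i) ⊕ q^i)`, for every `i` and vertex `v`:
`q^i_v = 1` iff bits `0, …, i-1` of the level of `v` are all `1`, and
`((M q^i) ⊕ q^i)_v = 1` iff bit `i` of the level of `v` is `1`. -/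
theorem levelling_iterated (n : ℕ) (parent : Fin n → Option (Fin n))
    (lvl : Fin n → ℕ)
    (hroot : ∀ v : Fin n, parent v = none → lvl v = 0)
    (hchild : ∀ v u : Fin n, parent v = some u → lvl v = lvl u + 1)
    (M : Matrix (Fin n) (Fin n) (ZMod 2))
    (hM : ∀ v u : Fin n, M v u = 1 ↔ (u = v ∨ IsAncestor parent u v))
    (q : ℕ → Fin n → ZMod 2)
    (hq0 : ∀ v, q 0 v = 1)
    (hqsucc : ∀ i v, q (i + 1) v = q i v * (M.mulVec (q i) + q i) v) :
    ∀ (i : ℕ) (v : Fin n),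
      (q i v = 1 ↔ ∀ j < i, Nat.testBit (lvl v) j = true) ∧
      ((M.mulVec (q i) + q i) v = 1 ↔ Nat.testBit (lvl v) i = true) := by
  classical
  have h2 : ∀ a b : ZMod 2, a + b + a = b := by decide
  have hMv : ∀ v u : Fin n, M v u = if (u = v ∨ IsAncestor parent u v) then 1 else 0 := by
    intro v u
    by_cases h : u = v ∨ IsAncestor parent u v
    · simp only [h, if_true]; exact (hM v u).2 h
    · rcases zmod2_cases (M v u) with h0 | h0
      · simp [h, h0]
      · exact absurd ((hM v u).1 h0) h
  have hB : ∀ i, (∀ v, q i v = if 2 ^ i ∣ lvl v + 1 then (1 : ZMod 2) else 0) →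
      ∀ v, (M.mulVec (q i) + q i) v = ((lvl v / 2 ^ i : ℕ) : ZMod 2) := by
    intro i hqi v
    have hp : 0 < 2 ^ i := Nat.two_pow_pos i
    have hsum := anc_sum parent lvl hroot hchild (2 ^ i) hp v
    have hnotanc : ¬ IsAncestor parent v v := fun h =>
      absurd (ancestor_lvl_lt parent lvl hchild h) (lt_irrefl _)
    have hmv : M.mulVec (q i) v = ∑ u, M v u * q i u := rfl
    have hterm : ∀ u : Fin n, M v u * q i u
        = (if u = v then q i v else 0)
          + (if IsAncestor parent u v then (if 2 ^ i ∣ lvl u + 1 then (1 : ZMod 2) else 0) else 0) := by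
      intro u
      rw [hMv, hqi u]
      by_cases hu : u = v
      · subst hu; simp [hnotanc, hqi]
      · by_cases ha : IsAncestor parent u v <;> simp [hu, ha]
    show M.mulVec (q i) v + q i v = _
    rw [hmv, Finset.sum_congr rfl (fun u _ => hterm u), Finset.sum_add_distrib,
      Finset.sum_ite_eq', hsum]
    simp only [Finset.mem_univ, if_true]
    exact h2 (q i v) _
  have key : ∀ i, ∀ v, q i v = if 2 ^ i ∣ lvl v + 1 then (1 : ZMod 2) else 0 := by
    intro i
    induction i with
    | zero => intro v; simp [hq0]
    | succ i ih =>
      intro v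
      rw [hqsucc, ih v, hB i ih v]
      by_cases h : 2 ^ i ∣ lvl v + 1
      · obtain ⟨m, hm⟩ := h
        have hp : 0 < 2 ^ i := Nat.two_pow_pos i
        have hm1 : 1 ≤ m := by nlinarith
        have hdiv : lvl v / 2 ^ i = m - 1 := by
          have hL : lvl v = 2 ^ i * (m - 1) + (2 ^ i - 1) := by
            have : 2 ^ i * m = 2 ^ i * (m - 1) + 2 ^ i := by
              rw [← Nat.mul_succ]; congr 1; omega
            omega
          rw [hL, Nat.mul_add_div hp, Nat.div_eq_of_lt (by omega)]; omega
        have hdvd2 : 2 ^ (i + 1) ∣ lvl v + 1 ↔ 2 ∣ m := by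
          rw [hm, pow_succ]
          constructor
          · rintro ⟨k, hk⟩
            refine ⟨k, Nat.eq_of_mul_eq_mul_left hp ?_⟩
            rw [hk]; ring
          · rintro ⟨k, hk⟩; exact ⟨k, by rw [hk]; ring⟩
        rw [if_pos ⟨m, hm⟩, one_mul, hdiv]
        rcases Nat.even_or_odd m with he | ho
        · obtain ⟨k, hk⟩ := he
          rw [if_pos (hdvd2.2 ⟨k, by omega⟩)]
          exact (cast_zmod2_eq_one _).2 (by omega)
        · obtain ⟨k, hk⟩ := ho
          rw [if_neg (fun hc => by obtain ⟨r, hr⟩ := hdvd2.1 hc; omega)]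
          have h0 : (m - 1) % 2 = 0 := by omega
          rw [← ZMod.natCast_mod (m - 1) 2, h0]; simp
      · rw [if_neg h, zero_mul,
          if_neg (fun hc => h ((pow_dvd_pow 2 (Nat.le_succ i)).trans hc))]
  intro i v
  constructor
  · rw [key i v]
    split_ifs with h
    · exact ⟨fun _ => (bits_iff i (lvl v)).1 h, fun _ => rfl⟩
    · exact ⟨fun h0 => absurd h0 (by decide), fun hb => absurd ((bits_iff i (lvl v)).2 hb) h⟩
  · rw [hB i (key i) v, cast_zmod2_eq_one, Nat.testBit_eq_decide_div_mod_eq]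
    simp
end
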